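/- With τ_k as above (the ratio sequence from the Legendre-coefficient recurrence with t = √13, s = (4+√13)/3, 0 < λ < 3), the coefficient sequence a_k (with a_k = a_{k−1}/τ_k) satisfies a_k/a_{k−1} > 2 for all k ≥ 2; hence |a_k| → ∞ and the Legendre series Σ a_k L_k(ξ) diverges at ξ = ±1. -/

import Mathlib

set_option maxHeartbeats 1000000


/-- If the Legendre coefficients a_k satisfy a_{k−1} = τ_k a_k with 0 < τ_k < 1/2 for k ≥ 2
(τ the ratio sequence of the recurrence with t = √13, s = (4+√13)/3, 0 < λ < 3),
then a_k/a_{k−1} > 2 for k ≥ 2, |a_k| → ∞, and the Legendre series diverges at ξ = ±1. -/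
theorem stmt_12 (lam : ℝ) (hlam0 : 0 < lam) (hlam3 : lam < 3)
    (τ : ℕ → ℝ) (a : ℕ → ℝ)
    (g f j : ℕ → ℝ)
    (hg : ∀ k : ℕ, g k = ((k : ℝ) + 1) * (((k : ℝ) + 1) ^ 2 - lam - 1) / (2 * (k : ℝ) + 3))
    (hf : ∀ k : ℕ, f k = Real.sqrt 13 * (k : ℝ) * ((k : ℝ) + 1) - ((4 + Real.sqrt 13) / 3) * lam)
    (hj : ∀ k : ℕ, j k = (k : ℝ) * ((k : ℝ) ^ 2 - lam - 1) / (2 * (k : ℝ) - 1))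
    (hτ0 : τ 0 = 0)
    (hτrec : ∀ k : ℕ, τ (k + 1) = g k / (f k - j k * τ k))
    (hane : ∀ k : ℕ, a k ≠ 0)
    (hτa : ∀ k : ℕ, 1 ≤ k → τ k = a (k - 1) / a k) :
    (∀ k : ℕ, 2 ≤ k → a k / a (k - 1) > 2) ∧
    Filter.Tendsto (fun k => |a k|) Filter.atTop Filter.atTop ∧
    ¬ Summable (fun k => a k * (1 : ℝ) ^ k) ∧
    ¬ Summable (fun k => a k * (-1 : ℝ) ^ k) := by
  set t := Real.sqrt 13 with htdef
  have ht2 : t ^ 2 = 13 := Real.sq_sqrt (by norm_num)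
  have ht0 : (0:ℝ) < t := Real.sqrt_pos.mpr (by norm_num)
  have ht36 : (3.6:ℝ) < t := by nlinarith
  have h4t : (0:ℝ) < 4 + t := by linarith
  have hτ1 : τ 1 = 1 / (4 + t) := by
    have h := hτrec 0
    rw [hτ0, hg 0, hf 0, hj 0] at h
    norm_num at h
    rw [h]
    field_simp
  have hτ2 : τ 2 = 3 / (5 * t) := by
    have h := hτrec 1
    rw [hg 1, hf 1, hj 1, hτ1] at h
    norm_num at h
    rw [h]
    have hden : t * 2 - (4 + t) / 3 * lam + lam * (4 + t)⁻¹ = 2*t*(3-lam)/3 := by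
      field_simp
      linear_combination lam * ht2
    rw [hden]
    have h3l : (0:ℝ) < 3 - lam := by linarith
    rw [div_eq_div_iff (by positivity) (by positivity)]
    ring
  have key : ∀ k : ℕ, 2 ≤ k → 0 < τ k ∧ τ k < 1/2 := by
    intro k hk
    induction k, hk using Nat.le_induction with
    | base =>
      rw [hτ2]
      constructor
      · positivity
      · rw [div_lt_iff₀ (by positivity)]
        nlinarith
    | succ k hk ih =>
      obtain ⟨ih1, ih2⟩ := ih
      have hx : (2:ℝ) ≤ (k:ℝ) := by exact_mod_cast hk
      set x := (k:ℝ) with hxdef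
      have hgpos : 0 < g k := by
        rw [hg]
        apply div_pos
        · nlinarith
        · nlinarith
      have hjpos : 0 < j k := by
        rw [hj]
        apply div_pos
        · nlinarith
        · nlinarith
      have hkey : 2 * g k ≤ f k - j k / 2 := by
        have e : f k - j k / 2 - 2 * g k =
            ((t*x*(x+1) - (4+t)/3*lam) * (2*(2*x+3)*(2*x-1))
              - 4*(x+1)*((x+1)^2 - lam - 1)*(2*x-1)
              - x*(x^2 - lam - 1)*(2*x+3)) / (2*(2*x+3)*(2*x-1)) := by
          have h1 : (2*x+3) ≠ 0 := by nlinarith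
          have h2 : (2*x-1) ≠ 0 := by nlinarith
          rw [hg, hf, hj]
          rw [← hxdef]
          rw [eq_div_iff (by simp [h1, h2])]
          linear_combination (-x*(x^2 - lam - 1)*(2*x+3)) * mul_inv_cancel₀ h2 + (-4*((x+1)*((x+1)^2 - lam - 1))*(2*x-1)) * mul_inv_cancel₀ h1
        have hnum : 0 ≤ (t*x*(x+1) - (4+t)/3*lam) * (2*(2*x+3)*(2*x-1))
              - 4*(x+1)*((x+1)^2 - lam - 1)*(2*x-1)
              - x*(x^2 - lam - 1)*(2*x+3) := by
          have hy : (0:ℝ) ≤ x - 2 := by linarith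
          have hA : 0 ≤ (3 - lam) * ((8*t+2)*x^2 + (8*t+11)*x - 12 - 6*t) := by
            apply mul_nonneg (by linarith)
            nlinarith
          nlinarith [hA,
            mul_nonneg (show (0:ℝ) ≤ 410*t-612 by nlinarith) hy,
            mul_nonneg (show (0:ℝ) ≤ 282*t-382 by nlinarith) (sq_nonneg (x-2)),
            mul_nonneg (show (0:ℝ) ≤ 80*t-103 by nlinarith) (pow_nonneg hy 3),
            mul_nonneg (show (0:ℝ) ≤ 8*t-10 by nlinarith) (pow_nonneg hy 4),
            ht36]
        have hdenpos : (0:ℝ) < 2*(2*x+3)*(2*x-1) := by nlinarith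
        nlinarith [div_nonneg hnum hdenpos.le, e]
      have hD : 2 * g k < f k - j k * τ k := by
        have : j k * τ k < j k * (1/2) := mul_lt_mul_of_pos_left ih2 hjpos
        linarith
      have hD0 : 0 < f k - j k * τ k := by linarith
      rw [hτrec k]
      constructor
      · exact div_pos hgpos hD0
      · rw [div_lt_iff₀ hD0]; linarith
  -- Part 1
  have part1 : ∀ k : ℕ, 2 ≤ k → a k / a (k - 1) > 2 := by
    intro k hk
    obtain ⟨hpos, hlt⟩ := key k hk
    have hτk := hτa k (by omega)
    have hak : a k / a (k - 1) = 1 / τ k := by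
      rw [hτk, one_div, inv_div]
    rw [hak, gt_iff_lt, lt_div_iff₀ hpos]
    linarith
  have hgrow : ∀ k : ℕ, 1 ≤ k → 2 * |a k| ≤ |a (k + 1)| := by
    intro k hk
    have h2 := part1 (k + 1) (by omega)
    simp only [Nat.add_sub_cancel] at h2
    have h0 : 0 < |a k| := abs_pos.mpr (hane k)
    have habs : (2:ℝ) ≤ |a (k + 1) / a k| := le_trans (by linarith) (le_abs_self _)
    rw [abs_div, le_div_iff₀ h0] at habs
    linarith
  have hpow : ∀ n : ℕ, 2 ^ n * |a 1| ≤ |a (n + 1)| := by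
    intro n
    induction n with
    | zero => simp
    | succ n ih =>
      have := hgrow (n + 1) (by omega)
      calc 2 ^ (n+1) * |a 1| = 2 * (2 ^ n * |a 1|) := by ring
        _ ≤ 2 * |a (n + 1)| := by linarith
        _ ≤ |a (n + 1 + 1)| := this
  have part2 : Filter.Tendsto (fun k => |a k|) Filter.atTop Filter.atTop := by
    rw [← Filter.tendsto_add_atTop_iff_nat 1]
    apply Filter.tendsto_atTop_mono hpow
    have h1 : Filter.Tendsto (fun n : ℕ => (2:ℝ) ^ n) Filter.atTop Filter.atTop :=
      tendsto_pow_atTop_atTop_of_one_lt (by norm_num)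
    exact h1.atTop_mul_const (abs_pos.mpr (hane 1))
  have notsum : ∀ c : ℝ, |c| = 1 → ¬ Summable (fun k => a k * c ^ k) := by
    intro c hc hs
    have h0 := hs.tendsto_atTop_zero
    have habs : Filter.Tendsto (fun k => |a k * c ^ k|) Filter.atTop (nhds 0) := by
      have := h0.abs
      simpa using this
    have heq : (fun k => |a k * c ^ k|) = fun k => |a k| := by
      funext k
      rw [abs_mul, abs_pow, hc, one_pow, mul_one]
    rw [heq] at habs
    exact not_tendsto_atTop_of_tendsto_nhds habs part2
  exact ⟨part1, part2, notsum 1 (by norm_num), notsum (-1) (by norm_num)⟩
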